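/- Let z = |z|e^{iω} with 1/2 ≤ |z| < 1, let I be an arc of 𝕋 with |I| < 1, let n ≥ 1, and suppose e^{iω} ∈ 2^{n+1}I \ 2^n I, where 2^k I is the arc concentric with I of length 2^k|I|. Then for all e^{iθ}, e^{iφ} ∈ I and 0 ≤ γ < 1, |P_z(θ) - P_z(φ)| / |e^{iθ}-e^{iφ}|^γ ≤ C |I|^{-1-γ} / 2^{2n} for an absolute constant C (depending only on γ). -/

import Mathlib

open MeasureTheory Set

noncomputable section

def unitDisk : Set ℂ := {z : ℂ | ‖z‖ < 1}

def carlesonSquare (a b : ℝ) : Set ℂ :=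
  {z : ℂ | ∃ r t : ℝ, a ≤ t ∧ t ≤ b ∧ 1 - (b - a) / (2 * Real.pi) ≤ r ∧ r < 1 ∧
    z = (r : ℂ) * Complex.exp (t * Complex.I)}

/-- `μ` is an `s`-Carleson measure. -/
def IsCarleson (μ : Measure ℂ) (s : ℝ) : Prop :=
  ∃ C > 0, ∀ a b : ℝ, a < b → b - a ≤ 2 * Real.pi →
    (μ (carlesonSquare a b)).toReal ≤ C * (b - a) ^ s

/-- Poisson kernel `P_z(θ)`. -/
def poissonKernelDisk (z : ℂ) (θ : ℝ) : ℝ :=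
  (1 - (‖z‖) ^ 2) / (‖1 - z * Complex.exp (-(θ * Complex.I))‖) ^ 2

/-- The balayage `S_μ(e^{it})`. -/
def balayage (μ : Measure ℂ) (t : ℝ) : ℝ :=
  ∫ z in unitDisk, poissonKernelDisk z t ∂μ

/-- The hyperbolic metric `β(z,w)`. -/
def hypDist (z w : ℂ) : ℝ :=
  (1 / 2) * Real.log ((1 + ‖(z - w) / (1 - (starRingEnd ℂ) z * w)‖) /
    (1 - ‖(z - w) / (1 - (starRingEnd ℂ) z * w)‖))

/-- Normalized area measure `dA` on `ℂ` (so that the unit disk has measure 1). -/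
def areaM : Measure ℂ := (ENNReal.ofReal Real.pi)⁻¹ • MeasureTheory.volume

/-- The B-balayage `G_μ`. -/
def bBalayage (μ : Measure ℂ) (z : ℂ) : ℝ :=
  ∫ w in unitDisk, (1 - (‖w‖) ^ 2) ^ 2 /
    (‖1 - (starRingEnd ℂ) z * w‖) ^ 4 ∂μ


lemma aux_one_sub_cos {δ : ℝ} (h : |δ| ≤ 3 * Real.pi / 2) : δ ^ 2 / 32 ≤ 1 - Real.cos δ := by
  have key : ∀ x : ℝ, 0 ≤ x → x ≤ 3 * Real.pi / 2 → x ^ 2 / 32 ≤ 1 - Real.cos x := by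
    intro x hx hx2
    have hπ2 : Real.pi < 3.15 := Real.pi_lt_d2
    have hπ1 : 3.14 < Real.pi := Real.pi_gt_d2
    rcases le_or_gt x (Real.pi / 2) with hc | hc
    · have hcos : Real.cos x = 1 - 2 * Real.sin (x / 2) ^ 2 := by
        have h1 := Real.cos_two_mul (x / 2)
        have h2 := Real.sin_sq_add_cos_sq (x / 2)
        have h3 : (2 : ℝ) * (x / 2) = x := by ring
        rw [h3] at h1
        linarith
      rcases eq_or_lt_of_le hx with h0 | h0
      · rw [← h0]; simp
      · have hy1 : x / 2 ≤ 1 := by nlinarith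
        have hs : x / 2 - (x / 2) ^ 3 / 4 < Real.sin (x / 2) := by
          have := Real.sin_gt_sub_cube (by positivity : 0 < x / 2)
          linarith [pow_pos (by positivity : 0 < x / 2) 3]
        have hcube : (x / 2) ^ 3 ≤ x / 2 := by nlinarith [sq_nonneg (x / 2)]
        have hnn : 0 ≤ x / 2 - (x / 2) ^ 3 / 4 := by linarith
        have hq2 : (x / 2 - (x / 2) ^ 3 / 4) ^ 2 ≤ Real.sin (x / 2) ^ 2 :=
          pow_le_pow_left₀ hnn hs.le 2
        have hfin : x ^ 2 / 32 ≤ 2 * (x / 2 - (x / 2) ^ 3 / 4) ^ 2 := by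
          nlinarith [h0.le, hy1, sq_nonneg x, sq_nonneg (x ^ 2 - 4), mul_pos h0 h0]
        rw [hcos]
        linarith
    · have hcn : Real.cos x ≤ 0 :=
        Real.cos_nonpos_of_pi_div_two_le_of_le hc.le (by nlinarith)
      nlinarith
  rcases le_total 0 δ with h0 | h0
  · exact key δ h0 (by rwa [abs_of_nonneg h0] at h)
  · have := key (-δ) (by linarith) (by rwa [abs_of_nonpos h0] at h)
    rw [Real.cos_neg] at this
    nlinarith [this]

lemma aux_abs_sq (r δ : ℝ) :
    ‖1 - (r : ℂ) * Complex.exp ((δ : ℂ) * Complex.I)‖ ^ 2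
      = (1 - r) ^ 2 + 2 * r * (1 - Real.cos δ) := by
  rw [Complex.sq_norm, Complex.normSq_apply]
  simp [Complex.exp_ofReal_mul_I_re, Complex.exp_ofReal_mul_I_im]
  linear_combination (r ^ 2) * Real.sin_sq_add_cos_sq δ

lemma aux_exp_diff (θ φ : ℝ) :
    (‖Complex.exp ((θ : ℂ) * Complex.I) - Complex.exp ((φ : ℂ) * Complex.I)‖) ^ 2
      = 2 * (1 - Real.cos (θ - φ)) := by
  rw [Complex.sq_norm, Complex.normSq_apply]
  simp [Complex.exp_ofReal_mul_I_re, Complex.exp_ofReal_mul_I_im]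
  linear_combination Real.sin_sq_add_cos_sq θ + Real.sin_sq_add_cos_sq φ + 2 * Real.cos_sub θ φ

set_option maxHeartbeats 1000000 in
/-- Case (ii) estimate: if e^{iω} ∈ 2^{n+1}I \ 2^n I then for e^{iθ}, e^{iφ} ∈ I,
|P_z(θ)-P_z(φ)|/|e^{iθ}-e^{iφ}|^γ ≤ C |I|^{-1-γ}/2^{2n}. -/
theorem poisson_diff_dyadic_bound (γ : ℝ) (hγ0 : 0 ≤ γ) (hγ1 : γ < 1) :
    ∃ C > 0, ∀ (r ω c L : ℝ) (n : ℕ), 1 ≤ n →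
      1 / 2 ≤ r → r < 1 → 0 < L → L < 1 →
      2 ^ (n + 1) * L ≤ 2 * Real.pi →
      2 ^ n * L / 2 ≤ |ω - c| → |ω - c| ≤ 2 ^ n * L →
      ∀ θ φ : ℝ, θ ∈ Set.Ioo (c - L / 2) (c + L / 2) →
        φ ∈ Set.Ioo (c - L / 2) (c + L / 2) →
        |poissonKernelDisk ((r : ℂ) * Complex.exp (ω * Complex.I)) θ -
          poissonKernelDisk ((r : ℂ) * Complex.exp (ω * Complex.I)) φ| *
          (‖Complex.exp (θ * Complex.I) - Complex.exp (φ * Complex.I)‖) ^ (-γ)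
          ≤ C * L ^ (-1 - γ) / 2 ^ (2 * n) := by
  refine ⟨1000000, by norm_num, ?_⟩
  intro r ω c L n hn hr1 hr2 hL hL1 h2pi hlow hupp θ φ hθ hφ
  have hπ2 : Real.pi < 3.15 := Real.pi_lt_d2
  set Δ : ℝ := 2 ^ n * L with hΔdef
  have h2n : (2 : ℝ) ≤ 2 ^ n := by
    calc (2 : ℝ) = 2 ^ 1 := by norm_num
    _ ≤ 2 ^ n := pow_le_pow_right₀ (by norm_num) hn
  have hΔpos : 0 < Δ := by positivity
  have hΔπ : Δ ≤ Real.pi := by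
    have he : (2 : ℝ) ^ (n + 1) = 2 * 2 ^ n := by ring
    rw [he] at h2pi
    nlinarith
  have hLΔ : 2 * L ≤ Δ := by
    rw [hΔdef]; nlinarith
  have hs0 : 0 < 1 - r := by linarith
  -- angle bounds
  have hθc : |θ - c| < L / 2 := abs_sub_lt_iff.2 ⟨by linarith [hθ.2], by linarith [hθ.1]⟩
  have hφc : |φ - c| < L / 2 := abs_sub_lt_iff.2 ⟨by linarith [hφ.2], by linarith [hφ.1]⟩
  have hδl : ∀ ψ : ℝ, |ψ - c| < L / 2 → Δ / 4 ≤ |ω - ψ| := by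
    intro ψ hψ
    have h1 : |ω - c| - |ψ - c| ≤ |ω - ψ| := by
      have := abs_sub_abs_le_abs_sub (ω - c) (ψ - c)
      have he : (ω - c) - (ψ - c) = ω - ψ := by ring
      rwa [he] at this
    linarith
  have hδu : ∀ ψ : ℝ, |ψ - c| < L / 2 → |ω - ψ| ≤ 3 / 2 * Δ := by
    intro ψ hψ
    have h1 : |ω - ψ| ≤ |ω - c| + |c - ψ| := abs_sub_le ω c ψ
    rw [abs_sub_comm c ψ] at h1
    linarith
  have hδθl := hδl θ hθc
  have hδθu := hδu θ hθc
  have hδφl := hδl φ hφc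
  have hδφu := hδu φ hφc
  -- Poisson kernel formula
  have habsz : ‖(r : ℂ) * Complex.exp ((ω : ℂ) * Complex.I)‖ = r := by
    rw [norm_mul, Complex.norm_exp_ofReal_mul_I, Complex.norm_real, Real.norm_eq_abs,
      abs_of_nonneg (by linarith : (0:ℝ) ≤ r), mul_one]
  have hP : ∀ ψ : ℝ, poissonKernelDisk ((r : ℂ) * Complex.exp (ω * Complex.I)) ψ
      = (1 - r ^ 2) / ((1 - r) ^ 2 + 2 * r * (1 - Real.cos (ω - ψ))) := by
    intro ψ
    unfold poissonKernelDisk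
    rw [habsz]
    congr 1
    rw [show (r : ℂ) * Complex.exp ((ω : ℂ) * Complex.I) * Complex.exp (-((ψ : ℂ) * Complex.I))
        = (r : ℂ) * Complex.exp (((ω - ψ : ℝ) : ℂ) * Complex.I) by
      rw [mul_assoc, ← Complex.exp_add]; congr 1; push_cast; ring]
    exact aux_abs_sq r (ω - ψ)
  set a : ℝ := (1 - r) ^ 2 + 2 * r * (1 - Real.cos (ω - θ)) with hadef
  set b : ℝ := (1 - r) ^ 2 + 2 * r * (1 - Real.cos (ω - φ)) with hbdef
  -- lower bounds for a and b
  have hcosθ : (ω - θ) ^ 2 / 32 ≤ 1 - Real.cos (ω - θ) :=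
    aux_one_sub_cos (by linarith : |ω - θ| ≤ 3 * Real.pi / 2)
  have hcosφ : (ω - φ) ^ 2 / 32 ≤ 1 - Real.cos (ω - φ) :=
    aux_one_sub_cos (by linarith : |ω - φ| ≤ 3 * Real.pi / 2)
  have hsqθ : Δ ^ 2 / 16 ≤ (ω - θ) ^ 2 := by
    have h := mul_self_le_mul_self (by positivity : (0:ℝ) ≤ Δ / 4) hδθl
    rw [abs_mul_abs_self] at h
    nlinarith [h]
  have hsqφ : Δ ^ 2 / 16 ≤ (ω - φ) ^ 2 := by
    have h := mul_self_le_mul_self (by positivity : (0:ℝ) ≤ Δ / 4) hδφl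
    rw [abs_mul_abs_self] at h
    nlinarith [h]
  have h2r : (1 : ℝ) ≤ 2 * r := by linarith
  have hcθ' : Δ ^ 2 / 512 ≤ 1 - Real.cos (ω - θ) := by linarith
  have hcφ' : Δ ^ 2 / 512 ≤ 1 - Real.cos (ω - φ) := by linarith
  have haΔ : Δ ^ 2 / 512 ≤ a := by
    have hm : (1 : ℝ) * (Δ ^ 2 / 512) ≤ (2 * r) * (1 - Real.cos (ω - θ)) :=
      mul_le_mul h2r hcθ' (by positivity) (by linarith)
    rw [hadef]; nlinarith [sq_nonneg (1 - r)]
  have hbΔ : Δ ^ 2 / 512 ≤ b := by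
    have hm : (1 : ℝ) * (Δ ^ 2 / 512) ≤ (2 * r) * (1 - Real.cos (ω - φ)) :=
      mul_le_mul h2r hcφ' (by positivity) (by linarith)
    rw [hbdef]; nlinarith [sq_nonneg (1 - r)]
  have has : (1 - r) ^ 2 ≤ a := by
    have hm : (0:ℝ) ≤ (2 * r) * (1 - Real.cos (ω - θ)) :=
      mul_nonneg (by linarith) (by nlinarith [Real.cos_le_one (ω - θ)])
    rw [hadef]; linarith
  have hapos : 0 < a := lt_of_lt_of_le (by positivity) haΔ
  have hbpos : 0 < b := lt_of_lt_of_le (by positivity) hbΔ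
  -- product lower bound
  have hab : (1 - r) * Δ ^ 3 / 13000 ≤ a * b := by
    rcases le_or_gt (1 - r) (Δ / 23) with hcase | hcase
    · have h1 : Δ ^ 2 / 512 * (Δ ^ 2 / 512) ≤ a * b :=
        mul_le_mul haΔ hbΔ (by positivity) hapos.le
      have h2 : (1 - r) * Δ ^ 3 ≤ (Δ / 23) * Δ ^ 3 :=
        mul_le_mul_of_nonneg_right hcase (by positivity)
      nlinarith [h1, h2]
    · have h1 : (1 - r) ^ 2 * (Δ ^ 2 / 512) ≤ a * b :=
        mul_le_mul has hbΔ (by positivity) hapos.le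
      have h2 : (1 - r) * (Δ / 23) ≤ (1 - r) * (1 - r) :=
        mul_le_mul_of_nonneg_left hcase.le hs0.le
      have h3 : ((1 - r) * (Δ / 23)) * (Δ ^ 2 / 512) ≤ ((1 - r) * (1 - r)) * (Δ ^ 2 / 512) :=
        mul_le_mul_of_nonneg_right h2 (by positivity)
      nlinarith [h1, h3]
  set t : ℝ := |θ - φ| with htdef
  have ht0 : 0 ≤ t := abs_nonneg _
  have htL : t < L := by
    have h1 : |θ - φ| ≤ |θ - c| + |c - φ| := abs_sub_le θ c φ
    rw [abs_sub_comm c φ] at h1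
    rw [htdef]; linarith
  -- numerator bound
  have hcc : |Real.cos (ω - θ) - Real.cos (ω - φ)| ≤ 3 / 2 * Δ * t := by
    rw [Real.cos_sub_cos]
    have h1 : |Real.sin ((ω - θ + (ω - φ)) / 2)| ≤ 3 / 2 * Δ := by
      refine le_trans Real.abs_sin_le_abs ?_
      rw [abs_div, abs_two]
      have : |ω - θ + (ω - φ)| ≤ |ω - θ| + |ω - φ| := abs_add_le _ _
      linarith
    have h2 : |Real.sin ((ω - θ - (ω - φ)) / 2)| ≤ t / 2 := by
      refine le_trans Real.abs_sin_le_abs ?_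
      rw [abs_div, abs_two]
      have he : ω - θ - (ω - φ) = -(θ - φ) := by ring
      rw [he, abs_neg, ← htdef]
    have h3 : 0 ≤ |Real.sin ((ω - θ - (ω - φ)) / 2)| := abs_nonneg _
    have h4 : 0 ≤ |Real.sin ((ω - θ + (ω - φ)) / 2)| := abs_nonneg _
    calc |-2 * Real.sin ((ω - θ + (ω - φ)) / 2) * Real.sin ((ω - θ - (ω - φ)) / 2)|
        = 2 * (|Real.sin ((ω - θ + (ω - φ)) / 2)| * |Real.sin ((ω - θ - (ω - φ)) / 2)|) := by
          rw [abs_mul, abs_mul, show |(-2:ℝ)| = 2 by norm_num]; ring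
      _ ≤ 2 * ((3 / 2 * Δ) * (t / 2)) :=
          mul_le_mul_of_nonneg_left (mul_le_mul h1 h2 h3 (by positivity)) (by norm_num)
      _ = 3 / 2 * Δ * t := by ring
  have hba : b - a = 2 * r * (Real.cos (ω - θ) - Real.cos (ω - φ)) := by
    rw [hadef, hbdef]; ring
  have hnum : |(1 - r ^ 2) * (b - a)| ≤ 6 * (1 - r) * Δ * t := by
    have hfac : (1 - r ^ 2) * (b - a)
        = ((1 - r ^ 2) * (2 * r)) * (Real.cos (ω - θ) - Real.cos (ω - φ)) := by
      rw [hba]; ring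
    have hr0 : (0:ℝ) ≤ r := by linarith
    have hrsq : r ^ 2 ≤ 1 := by
      have := pow_le_pow_left₀ hr0 hr2.le 2
      simpa using this
    have hpos1 : (0:ℝ) ≤ (1 - r ^ 2) * (2 * r) :=
      mul_nonneg (by linarith) (by linarith)
    have h4 : (1 - r ^ 2) * (2 * r) ≤ 4 * (1 - r) := by
      have e : (1 - r ^ 2) * (2 * r) = (1 - r) * ((1 + r) * (2 * r)) := by ring
      have hb2 : (1 + r) * (2 * r) ≤ 2 * 2 :=
        mul_le_mul (by linarith) (by linarith) (by linarith) (by norm_num)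
      rw [e]
      calc (1 - r) * ((1 + r) * (2 * r)) ≤ (1 - r) * 4 :=
            mul_le_mul_of_nonneg_left (by linarith) hs0.le
        _ = 4 * (1 - r) := by ring
    rw [hfac, abs_mul, abs_of_nonneg hpos1]
    have h5 := mul_le_mul h4 hcc (abs_nonneg _) (by linarith : (0:ℝ) ≤ 4 * (1 - r))
    linarith [h5]
  -- difference bound
  have hdiff : poissonKernelDisk ((r : ℂ) * Complex.exp (ω * Complex.I)) θ -
      poissonKernelDisk ((r : ℂ) * Complex.exp (ω * Complex.I)) φ
      = (1 - r ^ 2) * (b - a) / (a * b) := by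
    rw [hP θ, hP φ, ← hadef, ← hbdef]
    field_simp
  have hdiffb : |poissonKernelDisk ((r : ℂ) * Complex.exp (ω * Complex.I)) θ -
      poissonKernelDisk ((r : ℂ) * Complex.exp (ω * Complex.I)) φ| ≤ 78000 * t / Δ ^ 2 := by
    rw [hdiff, abs_div, abs_of_pos (mul_pos hapos hbpos)]
    have h5 : |(1 - r ^ 2) * (b - a)| / (a * b)
        ≤ (6 * (1 - r) * Δ * t) / ((1 - r) * Δ ^ 3 / 13000) := by
      apply div_le_div₀ (by positivity) hnum (by positivity) hab
    refine le_trans h5 (le_of_eq ?_)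
    field_simp
    ring
  -- exponential factor
  set E : ℝ := ‖Complex.exp ((θ : ℂ) * Complex.I) - Complex.exp ((φ : ℂ) * Complex.I)‖
    with hEdef
  have hE2 : E ^ 2 = 2 * (1 - Real.cos (θ - φ)) := aux_exp_diff θ φ
  rcases eq_or_ne θ φ with heq | hne
  · rw [heq, sub_self, abs_zero, zero_mul]
    positivity
  · have ht : 0 < t := by rw [htdef]; exact abs_pos.2 (sub_ne_zero.2 hne)
    have hEt : t / 4 ≤ E := by
      have hco : (θ - φ) ^ 2 / 32 ≤ 1 - Real.cos (θ - φ) := by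
        apply aux_one_sub_cos
        rw [← htdef]
        linarith only [Real.pi_gt_d2, htL, hL1, ht0]
      have e1 : t ^ 2 = (θ - φ) ^ 2 := by rw [htdef, sq_abs]
      have hE2' : t ^ 2 / 16 ≤ E ^ 2 := by
        rw [hE2, e1]; linarith only [hco]
      by_contra hcon
      push_neg at hcon
      have hE0 : 0 ≤ E := by rw [hEdef]; exact norm_nonneg _
      have h := mul_self_lt_mul_self hE0 hcon
      have e2 : E * E = E ^ 2 := (sq E).symm
      have e3 : t / 4 * (t / 4) = t ^ 2 / 16 := by ring
      linarith only [h, hE2', e2, e3]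
    have hEneg : E ^ (-γ) ≤ 4 * t ^ (-γ) := by
      have h1 : E ^ (-γ) ≤ (t / 4) ^ (-γ) :=
        Real.rpow_le_rpow_of_nonpos (by positivity) hEt (neg_nonpos.2 hγ0)
      have h2 : (t / 4) ^ (-γ) = t ^ (-γ) * (4 : ℝ) ^ γ := by
        rw [show t / 4 = t * (4 : ℝ)⁻¹ by ring,
          Real.mul_rpow ht.le (by norm_num), Real.inv_rpow (by norm_num),
          ← Real.rpow_neg (by norm_num), neg_neg]
      have h3 : (4 : ℝ) ^ γ ≤ 4 := by
        calc (4 : ℝ) ^ γ ≤ (4 : ℝ) ^ (1 : ℝ) :=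
              Real.rpow_le_rpow_of_exponent_le (by norm_num) hγ1.le
          _ = 4 := Real.rpow_one 4
      have h4 : 0 ≤ t ^ (-γ) := Real.rpow_nonneg ht0 _
      rw [h2] at h1
      have h6 : t ^ (-γ) * (4 : ℝ) ^ γ ≤ t ^ (-γ) * 4 :=
        mul_le_mul_of_nonneg_left h3 h4
      linarith only [h1, h6]
    have hmul : |poissonKernelDisk ((r : ℂ) * Complex.exp (ω * Complex.I)) θ -
        poissonKernelDisk ((r : ℂ) * Complex.exp (ω * Complex.I)) φ| * E ^ (-γ)
        ≤ (78000 * t / Δ ^ 2) * (4 * t ^ (-γ)) :=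
      mul_le_mul hdiffb hEneg (Real.rpow_nonneg (norm_nonneg _) _) (by positivity)
    have hpow : t * t ^ (-γ) = t ^ (1 - γ) := by
      rw [show (1 : ℝ) - γ = 1 + -γ by ring, Real.rpow_add ht, Real.rpow_one]
    have hstep : (78000 * t / Δ ^ 2) * (4 * t ^ (-γ)) = 312000 * t ^ (1 - γ) / Δ ^ 2 := by
      rw [← hpow]; ring
    have htLpow : t ^ (1 - γ) ≤ L ^ (1 - γ) :=
      Real.rpow_le_rpow ht0 htL.le (by linarith)
    have hLid : L ^ (1 - γ) = L ^ (-1 - γ) * L ^ (2 : ℕ) := by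
      rw [← Real.rpow_natCast L 2, ← Real.rpow_add hL]
      congr 1
      push_cast
      ring
    have hΔ2 : Δ ^ 2 = 2 ^ (2 * n) * L ^ 2 := by
      rw [hΔdef, mul_pow, ← pow_mul, Nat.mul_comm]
    have hLpos : 0 < L ^ (-1 - γ) := Real.rpow_pos_of_pos hL _
    calc |poissonKernelDisk ((r : ℂ) * Complex.exp (ω * Complex.I)) θ -
        poissonKernelDisk ((r : ℂ) * Complex.exp (ω * Complex.I)) φ| * E ^ (-γ)
        ≤ (78000 * t / Δ ^ 2) * (4 * t ^ (-γ)) := hmul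
      _ = 312000 * t ^ (1 - γ) / Δ ^ 2 := hstep
      _ ≤ 312000 * L ^ (1 - γ) / Δ ^ 2 := by gcongr
      _ = 312000 * L ^ (-1 - γ) / 2 ^ (2 * n) := by
          rw [hLid, hΔ2]
          have h2npos : (0 : ℝ) < 2 ^ (2 * n) := by positivity
          field_simp
      _ ≤ 1000000 * L ^ (-1 - γ) / 2 ^ (2 * n) := by gcongr; norm_num
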